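/- Affine maps φ(z) = az + b with a > 0 and Re b ≥ 0 induce bounded composition operators on H²(ℍ) with ‖C_φ‖ = 1/√a; in particular sup_{z∈ℍ} Re z / Re(az+b) = 1/a. -/

import Mathlib

open Complex MeasureTheory Filter Topology Set

noncomputable section

/-- The open right half-plane. -/
def RHP : Set ℂ := {z : ℂ | 0 < z.re}

/-- The Szegő kernel of the right half-plane: `kern w z = k_w(z) = 1/(z + conj w)`. -/
def kern (w z : ℂ) : ℂ := 1 / (z + (starRingEnd ℂ) w)

/-- The mean of `|f|^2` on the vertical line `Re = x`. -/
def hardyMean2 (f : ℂ → ℂ) (x : ℝ) : ℝ :=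
  (1 / (2 * Real.pi)) * ∫ y : ℝ, ‖f (x + y * Complex.I)‖ ^ 2

/-- Membership in the Hardy space `H²(ℍ)` of the right half-plane. -/
def MemHardy2 (f : ℂ → ℂ) : Prop :=
  DifferentiableOn ℂ f RHP ∧ ∃ C : ℝ, ∀ x : ℝ, 0 < x → hardyMean2 f x ≤ C

/-- The squared `H²` norm, as the supremum of the vertical-line means. -/
def hardyNormSq (f : ℂ → ℂ) : ℝ :=
  sSup {m : ℝ | ∃ x : ℝ, 0 < x ∧ m = hardyMean2 f x}

/-- `HardyInnerTendsto f g L` says the `H²(ℍ)` inner product `⟨f, g⟩` equals `L`,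
realized as a limit of inner products over vertical lines `Re = x` as `x → 0⁺`. -/
def HardyInnerTendsto (f g : ℂ → ℂ) (L : ℂ) : Prop :=
  Tendsto (fun x : ℝ => ((1 / (2 * Real.pi) : ℝ) : ℂ) *
      ∫ y : ℝ, f (x + y * Complex.I) * (starRingEnd ℂ) (g (x + y * Complex.I)))
    (𝓝[>] (0 : ℝ)) (𝓝 L)

/-- The composition operator `C_φ : f ↦ f ∘ φ` is bounded on `H²(ℍ)` with bound `M`. -/
def CompBoundedBy (φ : ℂ → ℂ) (M : ℝ) : Prop :=
  ∀ f : ℂ → ℂ, MemHardy2 f →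
    MemHardy2 (f ∘ φ) ∧ hardyNormSq (f ∘ φ) ≤ M ^ 2 * hardyNormSq f

/-- The operator norm of the composition operator `C_φ` on `H²(ℍ)`. -/
def compNorm (φ : ℂ → ℂ) : ℝ :=
  sInf {M : ℝ | 0 ≤ M ∧ CompBoundedBy φ M}

/-- A kernel `K : X × X → ℂ` is positive if every finite Gram sum
`∑ᵢⱼ cᵢ conj(cⱼ) K(xᵢ,xⱼ)` is real and nonnegative. -/
def IsPosKernel {X : Type*} (K : X → X → ℂ) : Prop :=
  ∀ (n : ℕ) (c : Fin n → ℂ) (x : Fin n → X),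
    0 ≤ (∑ i, ∑ j, c i * (starRingEnd ℂ) (c j) * K (x i) (x j)).re ∧
    (∑ i, ∑ j, c i * (starRingEnd ℂ) (c j) * K (x i) (x j)).im = 0

/-! ### Auxiliary lemmas -/

lemma integral_comp_affine (g : ℝ → ℝ) (a : ℝ) (ha : 0 < a) (c : ℝ) :
    ∫ y : ℝ, g (a * y + c) = a⁻¹ * ∫ y : ℝ, g y := by
  have h : (fun y : ℝ => g (a * y + c)) = fun y : ℝ => (fun t => g (t + c)) (a * y) := rfl
  rw [h, Measure.integral_comp_mul_left (fun t => g (t + c)) a,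
    integral_add_right_eq_self (fun t => g t) c, abs_of_pos (inv_pos.2 ha), smul_eq_mul]

lemma integral_inv_sq_add (c : ℝ) (hc : 0 < c) :
    ∫ y : ℝ, (c ^ 2 + y ^ 2)⁻¹ = Real.pi / c := by
  have h : (fun y : ℝ => (c ^ 2 + y ^ 2)⁻¹)
      = fun y : ℝ => (c ^ 2)⁻¹ * (fun u : ℝ => (1 + u ^ 2)⁻¹) (c⁻¹ * y) := by
    funext y
    rw [← mul_inv]
    congr 1
    field_simp
  rw [h, integral_const_mul, Measure.integral_comp_inv_mul_left (fun u : ℝ => (1 + u^2)⁻¹) c,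
    integral_univ_inv_one_add_sq, abs_of_pos hc, smul_eq_mul]
  field_simp

lemma hardyMean2_comp (f : ℂ → ℂ) (a : ℝ) (ha : 0 < a) (b : ℂ) (x : ℝ) :
    hardyMean2 (f ∘ fun z : ℂ => (a : ℂ) * z + b) x = a⁻¹ * hardyMean2 f (a * x + b.re) := by
  unfold hardyMean2
  have key : (fun y : ℝ => ‖(f ∘ fun z : ℂ => (a : ℂ) * z + b) (x + y * Complex.I)‖ ^ 2)
      = fun y : ℝ => (fun t : ℝ => ‖f ((a * x + b.re : ℝ) + (t : ℝ) * Complex.I)‖ ^ 2)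
          (a * y + b.im) := by
    funext y
    simp only [Function.comp_apply]
    rw [show (a : ℂ) * ((x : ℝ) + (y : ℝ) * Complex.I) + b
        = ((a * x + b.re : ℝ) : ℂ) + ((a * y + b.im : ℝ) : ℂ) * Complex.I from by
      apply Complex.ext <;> simp]
  have h2 : (∫ y : ℝ, ‖(f ∘ fun z : ℂ => (a : ℂ) * z + b) (x + y * Complex.I)‖ ^ 2)
      = a⁻¹ * ∫ y : ℝ, ‖f ((a * x + b.re : ℝ) + (y : ℝ) * Complex.I)‖ ^ 2 := by
    rw [key]
    exact integral_comp_affine (fun t => ‖f ((a * x + b.re : ℝ) + (t : ℝ) * Complex.I)‖ ^ 2) a ha b.im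
  rw [h2]
  ring

lemma hardyMean2_test (R x : ℝ) (hx : 0 < x + R) :
    hardyMean2 (fun z : ℂ => (z + (R : ℂ))⁻¹) x = (2 * (x + R))⁻¹ := by
  unfold hardyMean2
  have key : (fun y : ℝ => ‖((x : ℂ) + (y : ℝ) * Complex.I + (R : ℂ))⁻¹‖ ^ 2)
      = fun y : ℝ => ((x + R) ^ 2 + y ^ 2)⁻¹ := by
    funext y
    rw [norm_inv, inv_pow, Complex.sq_norm]
    congr 1
    simp [Complex.normSq_apply]
    ring
  rw [key, integral_inv_sq_add _ hx]
  have hπ := Real.pi_ne_zero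
  field_simp


/-- Affine maps `φ(z) = az + b`, `a > 0`, `Re b ≥ 0`, send `ℍ` into `ℍ`, have
`sup_{z∈ℍ} Re z / Re(az+b) = 1/a`, and induce bounded composition operators on
`H²(ℍ)` with `‖C_φ‖ = 1/√a`. -/
theorem affine_comp_norm (a : ℝ) (ha : 0 < a) (b : ℂ) (hb : 0 ≤ b.re) :
    MapsTo (fun z : ℂ => (a : ℂ) * z + b) RHP RHP ∧
      IsLUB {r : ℝ | ∃ z ∈ RHP, r = z.re / ((a : ℂ) * z + b).re} (1 / a) ∧
      CompBoundedBy (fun z : ℂ => (a : ℂ) * z + b) (1 / Real.sqrt a) ∧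
      compNorm (fun z : ℂ => (a : ℂ) * z + b) = 1 / Real.sqrt a := by
  have hre : ∀ z : ℂ, ((a : ℂ) * z + b).re = a * z.re + b.re := by
    intro z; simp
  -- Part 1
  have hmaps : MapsTo (fun z : ℂ => (a : ℂ) * z + b) RHP RHP := by
    intro z hz
    have hz' : 0 < z.re := hz
    show 0 < ((a : ℂ) * z + b).re
    rw [hre]
    nlinarith
  have hφd : Differentiable ℂ (fun z : ℂ => (a : ℂ) * z + b) :=
    (differentiable_id.const_mul _).add_const b
  -- Part 3
  have hsq : (1 / Real.sqrt a) ^ 2 = a⁻¹ := by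
    rw [div_pow, one_pow, Real.sq_sqrt ha.le, one_div]
  have hcb : CompBoundedBy (fun z : ℂ => (a : ℂ) * z + b) (1 / Real.sqrt a) := by
    intro f hf
    obtain ⟨hdiff, C, hC⟩ := hf
    have hmean : ∀ x : ℝ, 0 < x →
        hardyMean2 (f ∘ fun z : ℂ => (a : ℂ) * z + b) x ≤ a⁻¹ * C := by
      intro x hx
      rw [hardyMean2_comp f a ha b x]
      exact mul_le_mul_of_nonneg_left (hC _ (by nlinarith)) (inv_nonneg.2 ha.le)
    refine ⟨⟨hdiff.comp hφd.differentiableOn hmaps, a⁻¹ * C, hmean⟩, ?_⟩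
    rw [hsq]
    unfold hardyNormSq
    have hbddf : BddAbove {m : ℝ | ∃ x : ℝ, 0 < x ∧ m = hardyMean2 f x} := by
      refine ⟨C, ?_⟩
      rintro m ⟨x, hx, rfl⟩
      exact hC x hx
    refine csSup_le ⟨_, 1, one_pos, rfl⟩ ?_
    rintro m ⟨x, hx, rfl⟩
    rw [hardyMean2_comp f a ha b x]
    exact mul_le_mul_of_nonneg_left
      (le_csSup hbddf ⟨a * x + b.re, by nlinarith, rfl⟩) (inv_nonneg.2 ha.le)
  have hnn : (0 : ℝ) ≤ 1 / Real.sqrt a := by positivity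
  refine ⟨hmaps, ?_, hcb, ?_⟩
  -- Part 2
  · constructor
    · rintro r ⟨z, hz, rfl⟩
      have hz' : 0 < z.re := hz
      rw [hre]
      rw [div_le_div_iff₀ (by nlinarith) ha]
      nlinarith
    · intro u hu
      by_contra hcon
      push_neg at hcon
      have helt : ∀ X : ℝ, 0 < X → X / (a * X + b.re) ≤ u := by
        intro X hX
        have : X / (a * X + b.re) ∈ {r : ℝ | ∃ z ∈ RHP, r = z.re / ((a : ℂ) * z + b).re} := by
          refine ⟨(X : ℂ), by simpa [RHP] using hX, ?_⟩
          rw [hre]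
          simp
        exact hu this
      have hu0 : 0 < u := lt_of_lt_of_le (by positivity) (helt 1 one_pos)
      have hua : u * a < 1 := by
        have := mul_lt_mul_of_pos_right hcon ha
        rwa [one_div, inv_mul_cancel₀ ha.ne'] at this
      have hne' : (1 - u * a) ≠ 0 := by linarith
      obtain ⟨X, hXdef⟩ : ∃ X : ℝ, X = u * b.re / (1 - u * a) + 1 := ⟨_, rfl⟩
      have hX0 : 0 < X := by
        have : 0 ≤ u * b.re / (1 - u * a) := div_nonneg (by positivity) (by linarith)
        linarith [hXdef.ge]
      have hXe : X * (1 - u * a) = u * b.re + (1 - u * a) := by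
        rw [hXdef, add_mul, one_mul, div_mul_cancel₀ _ hne']
      have hden : 0 < a * X + b.re := by nlinarith
      have h2 := helt X hX0
      rw [div_le_iff₀ hden] at h2
      nlinarith
  -- Part 4
  · apply le_antisymm
    · exact csInf_le ⟨0, fun M hM => hM.1⟩ ⟨hnn, hcb⟩
    · refine le_csInf ⟨1 / Real.sqrt a, hnn, hcb⟩ ?_
      rintro M ⟨hM0, hM⟩
      suffices h : a⁻¹ ≤ M ^ 2 by
        have h2 : Real.sqrt a⁻¹ ≤ Real.sqrt (M ^ 2) := Real.sqrt_le_sqrt h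
        rwa [Real.sqrt_inv, Real.sqrt_sq hM0, ← one_div] at h2
      by_contra hcon
      push_neg at hcon
      have hMa : M ^ 2 * a < 1 := by
        have := mul_lt_mul_of_pos_right hcon ha
        rwa [inv_mul_cancel₀ ha.ne'] at this
      have hne' : (1 - M ^ 2 * a) ≠ 0 := by linarith
      obtain ⟨R, hRdef⟩ : ∃ R : ℝ, R = M ^ 2 * a * b.re / (1 - M ^ 2 * a) + 1 := ⟨_, rfl⟩
      have hR0 : 0 < R := by
        have : 0 ≤ M ^ 2 * a * b.re / (1 - M ^ 2 * a) :=
          div_nonneg (by positivity) (by linarith)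
        linarith [hRdef.ge]
      set fR : ℂ → ℂ := fun z : ℂ => (z + (R : ℂ))⁻¹ with hfRdef
      have hmemR : MemHardy2 fR := by
        constructor
        · apply DifferentiableOn.inv ((differentiable_id.add_const _).differentiableOn)
          intro z hz h0
          have hz' : 0 < z.re := hz
          have h1 := congrArg Complex.re h0
          simp only [id_eq, Complex.add_re, Complex.ofReal_re, Complex.zero_re] at h1
          linarith
        · refine ⟨(2 * R)⁻¹, fun x hx => ?_⟩
          rw [hfRdef, hardyMean2_test R x (by linarith)]
          gcongr <;> linarith
      obtain ⟨-, hineq⟩ := hM fR hmemR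
      have hnf : hardyNormSq fR ≤ (2 * R)⁻¹ := by
        unfold hardyNormSq
        refine csSup_le ⟨_, 1, one_pos, rfl⟩ ?_
        rintro m ⟨x, hx, rfl⟩
        rw [hfRdef, hardyMean2_test R x (by linarith)]
        gcongr <;> linarith
      have hbddφ : BddAbove {m : ℝ | ∃ x : ℝ, 0 < x ∧
          m = hardyMean2 (fR ∘ fun z : ℂ => (a : ℂ) * z + b) x} := by
        refine ⟨a⁻¹ * (2 * (b.re + R))⁻¹, ?_⟩
        rintro m ⟨x, hx, rfl⟩
        rw [hardyMean2_comp fR a ha b x, hfRdef,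
          hardyMean2_test R (a * x + b.re) (by nlinarith)]
        apply mul_le_mul_of_nonneg_left _ (inv_nonneg.2 ha.le)
        gcongr <;> nlinarith [mul_pos ha hx]
      have hlow : (2 * a * (b.re + R))⁻¹ ≤ hardyNormSq (fR ∘ fun z : ℂ => (a : ℂ) * z + b) := by
        unfold hardyNormSq
        have hne : (2 : ℝ) * (a * 0 + b.re + R) ≠ 0 := by nlinarith
        have htd : Tendsto (fun x : ℝ => a⁻¹ * (2 * (a * x + b.re + R))⁻¹) (𝓝 (0 : ℝ))
            (𝓝 (a⁻¹ * (2 * (a * 0 + b.re + R))⁻¹)) := by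
          apply Tendsto.const_mul
          exact ((continuous_const.mul (((continuous_const.mul continuous_id).add
            continuous_const).add continuous_const)).tendsto 0).inv₀ hne
        have heq : (fun x : ℝ => a⁻¹ * (2 * (a * x + b.re + R))⁻¹)
            =ᶠ[𝓝[>] (0 : ℝ)] fun x : ℝ => hardyMean2 (fR ∘ fun z : ℂ => (a : ℂ) * z + b) x := by
          filter_upwards [self_mem_nhdsWithin] with x hx
          have hx' : (0 : ℝ) < x := hx
          rw [hardyMean2_comp fR a ha b x, hfRdef,
            hardyMean2_test R (a * x + b.re) (by nlinarith)]
        have htd2 : Tendsto (fun x : ℝ => hardyMean2 (fR ∘ fun z : ℂ => (a : ℂ) * z + b) x)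
            (𝓝[>] (0 : ℝ)) (𝓝 (a⁻¹ * (2 * (a * 0 + b.re + R))⁻¹)) :=
          (htd.mono_left nhdsWithin_le_nhds).congr' heq
        have hval : a⁻¹ * (2 * (a * 0 + b.re + R))⁻¹ = (2 * a * (b.re + R))⁻¹ := by
          rw [← mul_inv]
          ring_nf
        rw [← hval]
        apply le_of_tendsto htd2
        filter_upwards [self_mem_nhdsWithin] with x hx
        exact le_csSup hbddφ ⟨x, hx, rfl⟩
      have hchain : (2 * a * (b.re + R))⁻¹ ≤ M ^ 2 * (2 * R)⁻¹ :=
        hlow.trans (hineq.trans (mul_le_mul_of_nonneg_left hnf (sq_nonneg M)))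
      have h1 : (0 : ℝ) < 2 * a * (b.re + R) := by nlinarith
      have h2 : (0 : ℝ) < 2 * R := by linarith
      rw [show (2 * a * (b.re + R))⁻¹ = 1 / (2 * a * (b.re + R)) from (one_div _).symm,
        show M ^ 2 * (2 * R)⁻¹ = M ^ 2 / (2 * R) from (div_eq_mul_inv _ _).symm,
        div_le_div_iff₀ h1 h2] at hchain
      have hRe : R * (1 - M ^ 2 * a) = M ^ 2 * a * b.re + (1 - M ^ 2 * a) := by
        rw [hRdef, add_mul, one_mul, div_mul_cancel₀ _ hne']
      nlinarith [hchain, hRe, hMa, hR0, hb, sq_nonneg M]
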